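/- Let Δ ≥ 2 be an integer, s ≥ 0 and α ∈ [0,1]. With g_{k,s}(x) = ∑_{i=0}^{⌊s⌋} C(k,i) x^i (1−x)^{k−i}, define h(0) = α, h(t+1) = 1 − (1−α) g_{Δ−1,s}(h(t)), and h̃(t+1) = 1 − (1−α) g_{Δ,s}(h(t)) for t ≥ 0. Then h̃(t) converges as t → ∞ to h̃ = 1 − (1−α) g_{Δ,s}(h*), where h* is the smallest fixed point in [0,1] of x ↦ 1 − (1−α) g_{Δ−1,s}(x). -/

import Mathlib

/-- `binCdf k s x = P(Bin(k,x) ≤ s) = ∑_{i=0}^{⌊s⌋} C(k,i) x^i (1-x)^{k-i}`,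
the function `g_{k,s}(x)` of the paper. -/
noncomputable def binCdf (k : ℕ) (s : ℝ) (x : ℝ) : ℝ :=
  ∑ i ∈ Finset.range (⌊s⌋₊ + 1), (k.choose i : ℝ) * x ^ i * (1 - x) ^ (k - i)

lemma sum_term_eq_one (k n : ℕ) (hn : k < n) (x : ℝ) :
    ∑ i ∈ Finset.range n, (k.choose i : ℝ) * x ^ i * (1 - x) ^ (k - i) = 1 := by
  rw [← Finset.sum_subset (Finset.range_subset_range.2 hn)
      (fun i _ hi => by
        have : k < i := by simpa using Finset.mem_range.not.mp hi |> fun h => by omega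
        simp [Nat.choose_eq_zero_of_lt this])]
  have h1 : ∑ i ∈ Finset.range (k+1), (k.choose i : ℝ) * x ^ i * (1 - x) ^ (k - i)
      = (x + (1-x))^k := by
    rw [add_pow x (1-x) k]
    exact Finset.sum_congr rfl fun i _ => by ring
  rw [h1]; ring_nf

lemma binCdf_nonneg (k : ℕ) (s : ℝ) {x : ℝ} (h0 : 0 ≤ x) (h1 : x ≤ 1) :
    0 ≤ binCdf k s x :=
  Finset.sum_nonneg fun i _ => mul_nonneg (mul_nonneg (Nat.cast_nonneg _) (pow_nonneg h0 _)) (pow_nonneg (by linarith) _)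

lemma binCdf_le_one (k : ℕ) (s : ℝ) {x : ℝ} (h0 : 0 ≤ x) (h1 : x ≤ 1) :
    binCdf k s x ≤ 1 := by
  have := sum_term_eq_one k (max (⌊s⌋₊ + 1) (k + 1)) (lt_of_lt_of_le (Nat.lt_succ_self k) (le_max_right _ _)) x
  rw [← this]
  exact Finset.sum_le_sum_of_subset_of_nonneg
    (Finset.range_subset_range.2 (le_max_left _ _))
    (fun i _ _ => mul_nonneg (mul_nonneg (Nat.cast_nonneg _) (pow_nonneg h0 _)) (pow_nonneg (by linarith) _))

lemma binCdf_continuous (k : ℕ) (s : ℝ) : Continuous (binCdf k s) := by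
  unfold binCdf
  exact continuous_finset_sum _ fun i _ => by fun_prop

lemma term_hasDerivAt (k i : ℕ) (x : ℝ) :
    HasDerivAt (fun y : ℝ => (k.choose i : ℝ) * y ^ i * (1 - y) ^ (k - i))
      ((k.choose i : ℝ) * (((i : ℝ) * x ^ (i - 1)) * (1 - x) ^ (k - i)
        + x ^ i * (((k - i : ℕ) : ℝ) * (1 - x) ^ (k - i - 1) * (-1)))) x := by
  have h1 : HasDerivAt (fun y : ℝ => y ^ i) ((i : ℝ) * x ^ (i - 1)) x := hasDerivAt_pow i x
  have h2 : HasDerivAt (fun y : ℝ => (1 - y) ^ (k - i))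
      (((k - i : ℕ) : ℝ) * (1 - x) ^ (k - i - 1) * (-1)) x := by
    have h2' := ((hasDerivAt_id x).const_sub 1).pow (k - i)
    simp at h2'
    rw [mul_neg_one]
    exact h2'
  have := (h1.mul h2).const_mul (k.choose i : ℝ)
  exact this.congr_of_eventuallyEq (Filter.Eventually.of_forall fun y => by simp only [Pi.mul_apply]; ring)

lemma sum_deriv (k m : ℕ) (hmk : m < k) (x : ℝ) :
    ∑ i ∈ Finset.range (m + 1), ((k.choose i : ℝ) * (((i : ℝ) * x ^ (i - 1)) * (1 - x) ^ (k - i)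
        + x ^ i * (((k - i : ℕ) : ℝ) * (1 - x) ^ (k - i - 1) * (-1))))
      = -((k : ℝ) * ((k - 1).choose m : ℝ) * x ^ m * (1 - x) ^ (k - 1 - m)) := by
  induction m with
  | zero =>
    simp
  | succ n ih =>
    rw [Finset.sum_range_succ, ih (by omega)]
    have hk1 : k - 1 + 1 = k := by omega
    have e1 : (k : ℝ) * ((k - 1).choose n : ℝ) = (k.choose (n + 1) : ℝ) * ((n + 1 : ℕ) : ℝ) := by
      have h' : k * (k - 1).choose n = k.choose (n + 1) * (n + 1) := by
        have := Nat.add_one_mul_choose_eq (k - 1) n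
        simpa [Nat.succ_eq_add_one, hk1] using this
      exact_mod_cast congrArg (Nat.cast : ℕ → ℝ) h'
    have e2 : ((k - 1).choose (n + 1) : ℝ) * (k : ℝ)
        = (k.choose (n + 1) : ℝ) * ((k - 1 - n : ℕ) : ℝ) := by
      have h' : (k - 1).choose (n + 1) * k = k.choose (n + 1) * (k - 1 - n) := by
        have := Nat.choose_mul_succ_eq (k - 1) (n + 1)
        have h2 : k - (n + 1) = k - 1 - n := by omega
        simpa [hk1, h2] using this
      exact_mod_cast congrArg (Nat.cast : ℕ → ℝ) h'
    rw [show k - (n + 1) - 1 = k - 1 - (n + 1) from by omega]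
    rw [show k - (n + 1) = k - 1 - n from by omega, show n + 1 - 1 = n from rfl]
    linear_combination (-(x ^ n * (1 - x) ^ (k - 1 - n))) * e1
      + (x ^ (n + 1) * (1 - x) ^ (k - 1 - (n + 1))) * e2

lemma binCdf_antitoneOn (k : ℕ) (s : ℝ) : AntitoneOn (binCdf k s) (Set.Icc 0 1) := by
  rcases le_or_gt k ⌊s⌋₊ with hk | hk
  · intro a _ b _ _
    rw [show binCdf k s b = 1 from sum_term_eq_one k (⌊s⌋₊ + 1) (by omega) b,
       show binCdf k s a = 1 from sum_term_eq_one k (⌊s⌋₊ + 1) (by omega) a]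
  · have hd : ∀ x : ℝ, HasDerivAt (binCdf k s)
        (-((k : ℝ) * ((k - 1).choose ⌊s⌋₊ : ℝ) * x ^ ⌊s⌋₊ * (1 - x) ^ (k - 1 - ⌊s⌋₊))) x := by
      intro x
      have := HasDerivAt.sum
        (fun i (_ : i ∈ Finset.range (⌊s⌋₊ + 1)) => term_hasDerivAt k i x)
      rw [sum_deriv k ⌊s⌋₊ hk x] at this
      exact this.congr_of_eventuallyEq (Filter.Eventually.of_forall fun y => by simp only [binCdf, Finset.sum_apply])
    apply antitoneOn_of_deriv_nonpos (convex_Icc 0 1) (binCdf_continuous k s).continuousOn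
      (fun x _ => (hd x).differentiableAt.differentiableWithinAt)
    intro x hx
    rw [interior_Icc, Set.mem_Ioo] at hx
    rw [(hd x).deriv]
    have h1 : (0:ℝ) ≤ 1 - x := by linarith [hx.2]
    have h2 : (0:ℝ) ≤ (k : ℝ) * ((k - 1).choose ⌊s⌋₊ : ℝ) * x ^ ⌊s⌋₊ * (1 - x) ^ (k - 1 - ⌊s⌋₊) :=
      mul_nonneg (mul_nonneg (mul_nonneg (Nat.cast_nonneg _) (Nat.cast_nonneg _))
        (pow_nonneg hx.1.le _)) (pow_nonneg h1 _)
    linarith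


/-- The probability `h̃(t+1) = 1 − (1−α) g_{Δ,s}(h(t))` that the root plays `B` at time
`t+1` converges to `h̃ = 1 − (1−α) g_{Δ,s}(h*)`, where `h*` is the smallest fixed point
of `x ↦ 1 − (1−α) g_{Δ−1,s}(x)` in `[0,1]`. -/
theorem root_prob_tendsto (Δ : ℕ) (hΔ : 2 ≤ Δ) (s : ℝ) (hs : 0 ≤ s)
    (α : ℝ) (hα : α ∈ Set.Icc (0 : ℝ) 1)
    (h htilde : ℕ → ℝ) (h0 : h 0 = α)
    (hrec : ∀ t : ℕ, h (t + 1) = 1 - (1 - α) * binCdf (Δ - 1) s (h t))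
    (htrec : ∀ t : ℕ, htilde (t + 1) = 1 - (1 - α) * binCdf Δ s (h t))
    (hstar : ℝ) (hstarmem : hstar ∈ Set.Icc (0 : ℝ) 1)
    (hstarfix : 1 - (1 - α) * binCdf (Δ - 1) s hstar = hstar)
    (hstarmin : ∀ x ∈ Set.Icc (0 : ℝ) 1, 1 - (1 - α) * binCdf (Δ - 1) s x = x → hstar ≤ x) :
    Filter.Tendsto htilde Filter.atTop (nhds (1 - (1 - α) * binCdf Δ s hstar)) := by
  obtain ⟨hα0, hα1⟩ := hα
  set F : ℝ → ℝ := fun x => 1 - (1 - α) * binCdf (Δ - 1) s x with hF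
  have h1α : (0:ℝ) ≤ 1 - α := by linarith
  have hFmem : ∀ x ∈ Set.Icc (0:ℝ) 1, F x ∈ Set.Icc α 1 := by
    intro x hx
    have hle := binCdf_le_one (Δ - 1) s hx.1 hx.2
    have hge := binCdf_nonneg (Δ - 1) s hx.1 hx.2
    constructor
    · simp only [hF]; nlinarith
    · simp only [hF]; nlinarith
  have hmem : ∀ t, h t ∈ Set.Icc (0:ℝ) 1 := by
    intro t
    induction t with
    | zero => rw [h0]; exact ⟨hα0, hα1⟩
    | succ n ih =>
      rw [hrec n]
      have := hFmem (h n) ih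
      exact ⟨le_trans hα0 this.1, this.2⟩
  have hFmono : MonotoneOn F (Set.Icc (0:ℝ) 1) := by
    intro x hx y hy hxy
    have := binCdf_antitoneOn (Δ - 1) s hx hy hxy
    have := mul_le_mul_of_nonneg_left this h1α
    simp only [hF]
    linarith
  have hFstar : F hstar = hstar := hstarfix
  have hαstar : α ≤ hstar := by
    have := (hFmem hstar hstarmem).1
    rwa [hFstar] at this
  have hmono : ∀ t, h t ≤ h (t + 1) := by
    intro t
    induction t with
    | zero =>
      rw [h0]
      exact (hFmem (h 0) (hmem 0)).1.trans_eq (hrec 0).symm |>.trans_eq rfl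
    | succ n ih =>
      rw [hrec n, hrec (n + 1)]
      exact hFmono (hmem n) (hmem (n + 1)) ih
  have hleStar : ∀ t, h t ≤ hstar := by
    intro t
    induction t with
    | zero => rw [h0]; exact hαstar
    | succ n ih =>
      rw [hrec n]
      calc F (h n) ≤ F hstar := hFmono (hmem n) hstarmem ih
        _ = hstar := hFstar
  have hMono : Monotone h := monotone_nat_of_le_succ hmono
  obtain ⟨L, hL⟩ : ∃ L, Filter.Tendsto h Filter.atTop (nhds L) := by
    rcases tendsto_of_monotone hMono with ht | ht
    · exfalso
      obtain ⟨t, htt⟩ := (ht.eventually_gt_atTop hstar).exists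
      exact absurd (hleStar t) (not_le.mpr htt)
    · exact ht
  have hLle : L ≤ hstar := le_of_tendsto hL (Filter.Eventually.of_forall hleStar)
  have hL0 : (0:ℝ) ≤ L := ge_of_tendsto hL (Filter.Eventually.of_forall fun t => (hmem t).1)
  have hFcont : Continuous F :=
    continuous_const.sub (continuous_const.mul (binCdf_continuous (Δ - 1) s))
  have hLfix : F L = L := by
    have c1 : Filter.Tendsto (fun t => h (t + 1)) Filter.atTop (nhds L) :=
      (Filter.tendsto_add_atTop_iff_nat 1).mpr hL
    have c2 : Filter.Tendsto (fun t => F (h t)) Filter.atTop (nhds (F L)) :=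
      (hFcont.tendsto L).comp hL
    refine tendsto_nhds_unique c2 ?_
    have : (fun t => F (h t)) = fun t => h (t + 1) := by
      funext t; rw [hrec t]
    rw [this]
    exact c1
  have hLeq : L = hstar :=
    le_antisymm hLle (hstarmin L ⟨hL0, hLle.trans hstarmem.2⟩ hLfix)
  have cG : Continuous (fun x => 1 - (1 - α) * binCdf Δ s x) :=
    continuous_const.sub (continuous_const.mul (binCdf_continuous Δ s))
  have hfin : Filter.Tendsto (fun t => htilde (t + 1)) Filter.atTop
      (nhds (1 - (1 - α) * binCdf Δ s hstar)) := by
    have := (cG.tendsto hstar).comp (hLeq ▸ hL)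
    simpa only [htrec, Function.comp_def] using this
  exact (Filter.tendsto_add_atTop_iff_nat 1).mp hfin
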